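/- arXiv:1907.00290 — 3 statements merged into one kernel-verified Lean document; each statement's English description precedes it below -/
import Mathlib

section
/- Let $0<\alpha<1$ and $\beta = 1-\alpha$. For all real $x > 1$, one has $x + \beta(x+1)(x-1) - x^{1+\alpha\beta} > 0$. -/
theorem stmt_0 (α : ℝ) (hα0 : 0 < α) (hα1 : α < 1) (β : ℝ) (hβ : β = 1 - α)
    (x : ℝ) (hx : 1 < x) :
    0 < x + β * (x + 1) * (x - 1) - x ^ (1 + α * β) := by
  have hx0 : (0:ℝ) < x := lt_trans one_pos hx
  have hβ0 : 0 < β := by rw [hβ]; linarith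
  have hβ1 : β ≤ 1 := by rw [hβ]; linarith
  have h1 : x ^ (1 + α * β) < x ^ (1 + β) := by
    rw [Real.rpow_lt_rpow_left_iff hx]
    nlinarith
  have h2 : x ^ (1 + β) = x * x ^ β := by
    rw [Real.rpow_add hx0, Real.rpow_one]
  have h3 : x ^ β ≤ 1 + β * (x - 1) := by
    have := rpow_one_add_le_one_add_mul_self (s := x - 1) (by linarith) hβ0.le hβ1
    simpa using this
  have h4 : x * x ^ β ≤ x * (1 + β * (x - 1)) :=
    mul_le_mul_of_nonneg_left h3 hx0.le
  nlinarith [h1, h4]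
end

section
/- Let $0<\alpha<1$, $\beta=1-\alpha$, and define $g(x) = \int_0^x t^{-\alpha}(1+t)^{-1}\,dt$ and $G(x) = g(x) - x^{\beta(\beta+1)} g(1/x)$ for $x > 0$. Then $G(x) < 0$ for all $x > 1$. -/
open Real MeasureTheory Set intervalIntegral

private lemma aux_contOn {α : ℝ} :
    ContinuousOn (fun t : ℝ => t ^ (-α) * (1 + t)⁻¹) (Set.Ioi (0:ℝ)) := by
  apply ContinuousOn.mul
  · exact ContinuousOn.rpow_const continuousOn_id fun t ht => Or.inl (ne_of_gt ht)
  · exact ContinuousOn.inv₀ (continuous_const.add continuous_id).continuousOn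
      fun t ht => by have : (0:ℝ) < t := ht; positivity

private lemma aux_intble {α : ℝ} (hα0 : 0 < α) (hα1 : α < 1) {b : ℝ} (hb : 0 ≤ b) :
    IntervalIntegrable (fun t : ℝ => t ^ (-α) * (1 + t)⁻¹) volume 0 b := by
  have h : IntervalIntegrable (fun t : ℝ => t ^ (-α)) volume 0 b :=
    intervalIntegrable_rpow' (by linarith)
  apply h.mono_fun
  · refine (aux_contOn.mono ?_).aestronglyMeasurable measurableSet_uIoc
    rw [Set.uIoc_of_le hb]
    exact Set.Ioc_subset_Ioi_self
  · rw [Filter.EventuallyLE, ae_restrict_iff' measurableSet_uIoc]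
    filter_upwards with t ht
    rw [Set.uIoc_of_le hb] at ht
    have ht0 : (0:ℝ) < t := ht.1
    have h1t : (0:ℝ) < 1 + t := by linarith
    have hpow : (0:ℝ) ≤ t ^ (-α) := Real.rpow_nonneg ht0.le _
    rw [Real.norm_eq_abs, Real.norm_eq_abs, abs_of_nonneg (by positivity),
      abs_of_nonneg hpow]
    exact mul_le_of_le_one_right hpow (inv_le_one_of_one_le₀ (by linarith))

private lemma aux_core {α β u : ℝ} (hα0 : 0 < α) (hα1 : α < 1) (hβ : β = 1 - α)
    (hu0 : 0 < u) (hu1 : u < 1) :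
    u ^ (1 - α * β) + 1 < (1 + u) * (β + 1 - β * u) := by
  subst hβ
  have hβ0 : (0:ℝ) < 1 - α := by linarith
  have hab : 0 < α * (1 - α) := mul_pos hα0 hβ0
  have h1 : u ^ (1 - α * (1 - α)) ≤ (1 - α * (1 - α)) * u + (α * (1 - α)) * 1 := by
    have := Real.geom_mean_le_arith_mean2_weighted
      (by nlinarith : (0:ℝ) ≤ 1 - α * (1 - α)) hab.le hu0.le zero_le_one (by ring)
    simpa using this
  nlinarith [mul_pos (mul_pos hβ0 (by linarith : (0:ℝ) < 1 - u))
    (by linarith : (0:ℝ) < u + (1 - α))]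

private lemma aux_glower {α β : ℝ} (hα0 : 0 < α) (hα1 : α < 1) (hβ : β = 1 - α)
    {u : ℝ} (hu0 : 0 < u) :
    u ^ β / β - u ^ (β + 1) / (β + 1) ≤ ∫ t in Set.Ioc (0:ℝ) u, t ^ (-α) * (1 + t)⁻¹ := by
  have hβ0 : (0:ℝ) < β := by rw [hβ]; linarith
  rw [← intervalIntegral.integral_of_le hu0.le]
  have h1 : IntervalIntegrable (fun t : ℝ => t ^ (-α)) volume 0 u :=
    intervalIntegrable_rpow' (by linarith)
  have h2 : IntervalIntegrable (fun t : ℝ => t ^ β) volume 0 u :=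
    intervalIntegrable_rpow' (by linarith)
  have h3 := aux_intble hα0 hα1 hu0.le
  have hcalc : ∫ t in (0:ℝ)..u, (t ^ (-α) - t ^ β) = u ^ β / β - u ^ (β + 1) / (β + 1) := by
    rw [intervalIntegral.integral_sub h1 h2, integral_rpow (Or.inl (by linarith)),
      integral_rpow (Or.inl (by linarith)),
      Real.zero_rpow (by linarith : -α + 1 ≠ 0),
      Real.zero_rpow (by linarith : β + 1 ≠ 0)]
    rw [show -α + 1 = β by rw [hβ]; ring]
    ring
  rw [← hcalc]
  apply intervalIntegral.integral_mono_on hu0.le (h1.sub h2) h3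
  intro t ht
  rcases eq_or_lt_of_le ht.1 with h | h
  · simp [← h, Real.zero_rpow (by linarith : -α ≠ 0),
      Real.zero_rpow (by linarith : β ≠ 0)]
  · have h1t : (0:ℝ) < 1 + t := by linarith
    have key : 1 - t ≤ (1 + t)⁻¹ := by
      rw [inv_eq_one_div, le_div_iff₀ h1t]; nlinarith
    have : t ^ (-α) - t ^ β = t ^ (-α) * (1 - t) := by
      rw [mul_sub, mul_one, ← Real.rpow_add_one h.ne' (-α),
        show -α + 1 = β by rw [hβ]; ring]
    rw [this]
    exact mul_le_mul_of_nonneg_left key (Real.rpow_nonneg h.le _)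

private lemma aux_gderiv {α : ℝ} (hα0 : 0 < α) (hα1 : α < 1) {g : ℝ → ℝ}
    (hg : ∀ x > (0:ℝ), g x = ∫ t in Set.Ioc (0:ℝ) x, t ^ (-α) * (1 + t)⁻¹)
    {y : ℝ} (hy : 0 < y) :
    HasDerivAt g (y ^ (-α) * (1 + y)⁻¹) y := by
  have hcont : ContinuousAt (fun t : ℝ => t ^ (-α) * (1 + t)⁻¹) y :=
    ((Real.continuousAt_rpow_const y (-α) (Or.inl hy.ne')).mul
      (ContinuousAt.inv₀ (continuousAt_const.add continuousAt_id)
        (by positivity : 1 + y ≠ 0)))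
  have hmeas : StronglyMeasurableAtFilter (fun t : ℝ => t ^ (-α) * (1 + t)⁻¹)
      (nhds y) volume :=
    ⟨Set.Ioi 0, isOpen_Ioi.mem_nhds hy, aux_contOn.aestronglyMeasurable measurableSet_Ioi⟩
  have key : HasDerivAt (fun x => ∫ t in (0:ℝ)..x, t ^ (-α) * (1 + t)⁻¹)
      (y ^ (-α) * (1 + y)⁻¹) y :=
    intervalIntegral.integral_hasDerivAt_right (aux_intble hα0 hα1 hy.le) hmeas hcont
  apply key.congr_of_eventuallyEq
  filter_upwards [isOpen_Ioi.mem_nhds hy] with z hz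
  rw [hg z hz, intervalIntegral.integral_of_le (le_of_lt hz)]

theorem stmt_2 (α : ℝ) (hα0 : 0 < α) (hα1 : α < 1) (β : ℝ) (hβ : β = 1 - α)
    (g G : ℝ → ℝ) (hg : ∀ x > (0:ℝ), g x = ∫ t in Set.Ioc (0:ℝ) x, t ^ (-α) * (1 + t)⁻¹)
    (hG : ∀ x > (0:ℝ), G x = g x - x ^ (β * (β + 1)) * g (1 / x))
    (x : ℝ) (hx : 1 < x) :
    G x < 0 := by
  have hβ0 : (0:ℝ) < β := by rw [hβ]; linarith
  -- derivative of G at every y > 0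
  have hGd : ∀ y : ℝ, 0 < y → HasDerivAt G
      (y ^ (-α) * (1 + y)⁻¹ - (β * (β + 1) * y ^ (β * (β + 1) - 1) * g (1 / y)
        + y ^ (β * (β + 1)) * ((1 / y) ^ (-α) * (1 + 1 / y)⁻¹ * (-(y ^ 2)⁻¹)))) y := by
    intro y hy
    have h1 : HasDerivAt (fun x : ℝ => 1 / x) (-(y ^ 2)⁻¹) y := by
      simpa [one_div] using hasDerivAt_inv hy.ne'
    have h2 : HasDerivAt (fun x : ℝ => g (1 / x))
        ((1 / y) ^ (-α) * (1 + 1 / y)⁻¹ * (-(y ^ 2)⁻¹)) y :=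
      (aux_gderiv hα0 hα1 hg (by positivity : (0:ℝ) < 1 / y)).comp y h1
    have h3 : HasDerivAt (fun x : ℝ => x ^ (β * (β + 1)))
        (β * (β + 1) * y ^ (β * (β + 1) - 1)) y :=
      Real.hasDerivAt_rpow_const (Or.inl hy.ne')
    have h4 := (aux_gderiv hα0 hα1 hg hy).sub (h3.mul h2)
    apply h4.congr_of_eventuallyEq
    filter_upwards [isOpen_Ioi.mem_nhds hy] with z hz using hG z hz
  -- negativity of the derivative for y > 1
  have hneg : ∀ y : ℝ, 1 < y →
      y ^ (-α) * (1 + y)⁻¹ - (β * (β + 1) * y ^ (β * (β + 1) - 1) * g (1 / y)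
        + y ^ (β * (β + 1)) * ((1 / y) ^ (-α) * (1 + 1 / y)⁻¹ * (-(y ^ 2)⁻¹))) < 0 := by
    intro y hy1
    have hy0 : (0:ℝ) < y := by linarith
    have h1y : (0:ℝ) < 1 + y := by linarith
    have hu0 : (0:ℝ) < 1 / y := by positivity
    have hu1 : 1 / y < 1 := by rw [div_lt_one hy0]; linarith
    have hI : ∀ a : ℝ, (1 / y) ^ a = y ^ (-a) := fun a => by
      rw [one_div, Real.inv_rpow hy0.le, ← Real.rpow_neg hy0.le]
    have hL := aux_glower hα0 hα1 hβ hu0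
    rw [← hg (1 / y) hu0] at hL
    have hcore := aux_core hα0 hα1 hβ hu0 hu1
    -- core inequality in power form
    have hcore' : y ^ (-(1 - α * β)) < β + y⁻¹ - β * (y⁻¹ * y⁻¹) := by
      rw [hI] at hcore
      have hexp : (1 + 1 / y) * (β + 1 - β * (1 / y)) =
          β + 1 + 1 / y - β * (1 / y * (1 / y)) := by ring
      rw [hexp, one_div] at hcore
      linarith
    have hYpos : (0:ℝ) < y ^ (β * β) := Real.rpow_pos_of_pos hy0 _
    have hm := (mul_lt_mul_iff_right₀ hYpos).2 hcore'
    have hinv1 : y⁻¹ = y ^ (-1:ℝ) := by rw [Real.rpow_neg hy0.le, Real.rpow_one]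
    have hid1 : y ^ (β * β) * y ^ (-(1 - α * β)) = y ^ (-α) := by
      rw [← Real.rpow_add hy0]; congr 1 <;> (rw [hβ]; ring_nf)
    have hid2 : y ^ (β * β) * y ^ (-1:ℝ) = y ^ (β * β - 1) := by
      rw [← Real.rpow_add hy0]; congr 1 <;> ring_nf
    have hid3 : y ^ (β * β) * (y ^ (-1:ℝ) * y ^ (-1:ℝ)) = y ^ (β * β - 2) := by
      rw [← Real.rpow_add hy0, ← Real.rpow_add hy0]; congr 1 <;> ring_nf
    have hid4 : y ^ (β * β) * (β + y⁻¹ - β * (y⁻¹ * y⁻¹)) =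
        β * y ^ (β * β) + y ^ (β * β - 1) - β * y ^ (β * β - 2) := by
      rw [hinv1, show y ^ (β * β) * (β + y ^ (-1:ℝ) - β * (y ^ (-1:ℝ) * y ^ (-1:ℝ))) =
        β * y ^ (β * β) + y ^ (β * β) * y ^ (-1:ℝ)
          - β * (y ^ (β * β) * (y ^ (-1:ℝ) * y ^ (-1:ℝ))) from by ring, hid2, hid3]
    rw [hid1, hid4] at hm
    -- hm : y ^ (-α) < β * y ^ (β*β) + y ^ (β*β-1) - β * y ^ (β*β-2)
    have target' : y ^ (-α) + y ^ (β * β) <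
        ((β + 1) * y ^ (β * β - 1) - β * y ^ (β * β - 2)) * (1 + y) := by
      have r1 : y ^ (β * β - 1) * y = y ^ (β * β) := by
        rw [← Real.rpow_add_one hy0.ne']; congr 1 <;> ring_nf
      have r2 : y ^ (β * β - 2) * y = y ^ (β * β - 1) := by
        rw [← Real.rpow_add_one hy0.ne']; congr 1 <;> ring_nf
      have hexp : ((β + 1) * y ^ (β * β - 1) - β * y ^ (β * β - 2)) * (1 + y) =
          (β + 1) * y ^ (β * β - 1) + (β + 1) * (y ^ (β * β - 1) * y)
            - β * y ^ (β * β - 2) - β * (y ^ (β * β - 2) * y) := by ring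
      rw [hexp, r1, r2]
      linarith
    have final : y ^ (-α) * (1 + y)⁻¹ + y ^ (β * β) * (1 + y)⁻¹ <
        (β + 1) * y ^ (β * β - 1) - β * y ^ (β * β - 2) := by
      rw [← add_mul, ← div_eq_mul_inv, div_lt_iff₀ h1y]
      exact target'
    -- rewrite the goal
    have hfrac : (1 + 1 / y)⁻¹ = y * (1 + y)⁻¹ := by
      rw [show (1 + 1 / y) = (1 + y) / y from by field_simp; ring, inv_div, div_eq_mul_inv]
    have hy2 : ((y:ℝ) ^ 2)⁻¹ = y ^ (-2:ℝ) := by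
      rw [Real.rpow_neg hy0.le, show ((2:ℝ)) = ((2:ℕ):ℝ) from by norm_num,
        Real.rpow_natCast]
    have hidT : y ^ (β * (β + 1)) * (y ^ α * (y * (1 + y)⁻¹) * -(y ^ (-2:ℝ))) =
        -(y ^ (β * β) * (1 + y)⁻¹) := by
      have e : y ^ (β * (β + 1)) * y ^ α * y ^ (-2:ℝ) * y = y ^ (β * β) := by
        rw [← Real.rpow_add hy0, ← Real.rpow_add hy0, ← Real.rpow_add_one hy0.ne']
        congr 1 <;> (rw [hβ]; ring_nf)
      rw [show y ^ (β * (β + 1)) * (y ^ α * (y * (1 + y)⁻¹) * -(y ^ (-2:ℝ))) =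
        -((y ^ (β * (β + 1)) * y ^ α * y ^ (-2:ℝ) * y) * (1 + y)⁻¹) from by ring, e]
    have e1 : y ^ (β * (β + 1) - 1) * y ^ (-β) = y ^ (β * β - 1) := by
      rw [← Real.rpow_add hy0]; congr 1 <;> ring_nf
    have e2 : y ^ (β * (β + 1) - 1) * y ^ (-(β + 1)) = y ^ (β * β - 2) := by
      rw [← Real.rpow_add hy0]; congr 1 <;> ring_nf
    have hβ1 : (0:ℝ) < β + 1 := by linarith
    have hidL : β * (β + 1) * y ^ (β * (β + 1) - 1) *
        (y ^ (-β) / β - y ^ (-(β + 1)) / (β + 1)) =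
        (β + 1) * y ^ (β * β - 1) - β * y ^ (β * β - 2) := by
      rw [← e1, ← e2]
      field_simp
    have hC : (0:ℝ) < β * (β + 1) * y ^ (β * (β + 1) - 1) := by positivity
    have hmul := mul_le_mul_of_nonneg_left hL hC.le
    simp only [hI, neg_neg] at hmul ⊢
    rw [hidL] at hmul
    rw [hfrac, hy2, hidT]
    -- hmul : (β+1)*y^(β*β-1) - β*y^(β*β-2) ≤ C * g(1/y)  (careful direction)
    linarith [final, hmul]
  -- conclude by strict antitonicity
  have hanti : StrictAntiOn G (Set.Ici 1) := by
    apply strictAntiOn_of_deriv_neg (convex_Ici 1)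
    · intro z hz
      exact (hGd z (lt_of_lt_of_le one_pos hz)).continuousAt.continuousWithinAt
    · intro z hz
      rw [interior_Ici] at hz
      rw [(hGd z (lt_trans one_pos hz)).deriv]
      exact hneg z hz
  have hG1 : G 1 = 0 := by
    rw [hG 1 one_pos]
    norm_num
  have := hanti (Set.self_mem_Ici) (Set.mem_Ici.2 hx.le) hx
  linarith
end

section
/- Let $T$ be a nonnegative random variable with $P(T > t) = L(t)t^{-\alpha}$ for all $t>0$, where $0<\alpha<1$ and $L$ is slowly varying (i.e., $L(ct)/L(t) \to 1$ as $t\to\infty$ for every $c>0$). Then for every $\epsilon > 0$ there exists $\hat t > 0$ such that for all $t > \hat t$ and all $s > 0$: $P(T > s+t \mid T > s) \geq t^{-(\alpha+\epsilon)}$. -/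
open MeasureTheory Filter Real

theorem stmt_6 (α : ℝ) (hα : α ∈ Set.Ioo (0:ℝ) 1)
    (L : ℝ → ℝ) (hLpos : ∀ t > (0:ℝ), 0 < L t)
    (hL : ∀ c > (0:ℝ), Tendsto (fun t => L (c * t) / L t) atTop (nhds 1))
    (Ω : Type*) [MeasurableSpace Ω] (P : Measure Ω) [IsProbabilityMeasure P]
    (T : Ω → ℝ) (hmeas : Measurable T)
    (htail : ∀ t > (0:ℝ), (P {ω | T ω > t}).toReal = L t * t ^ (-α))
    (ε : ℝ) (hε : 0 < ε) :
    ∃ tHat > (0:ℝ), ∀ t > tHat, ∀ s > (0:ℝ),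
      (P {ω | T ω > s + t}).toReal / (P {ω | T ω > s}).toReal ≥ t ^ (-(α + ε)) := by
  obtain ⟨hα0, hα1⟩ := hα
  set β : ℝ := α + ε with hβ
  set β' : ℝ := α + ε/2 with hβ'
  have hβ'pos : 0 < β' := by rw [hβ']; linarith
  have hβpos : 0 < β := by rw [hβ]; linarith
  set g : ℝ → ℝ := fun u => (P {ω | T ω > u}).toReal with hg
  have gmono : ∀ x y : ℝ, x ≤ y → g y ≤ g x := by
    intro x y hxy
    apply ENNReal.toReal_mono (measure_ne_top _ _)
    exact measure_mono (fun ω h => lt_of_le_of_lt hxy h)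
  have gtail : ∀ u : ℝ, 0 < u → g u = L u * u ^ (-α) := fun u hu => htail u hu
  have gpos : ∀ u : ℝ, 0 < u → 0 < g u := by
    intro u hu
    rw [gtail u hu]
    have := hLpos u hu
    positivity
  have gnonneg : ∀ u : ℝ, 0 ≤ g u := fun u => ENNReal.toReal_nonneg
  have gle1 : ∀ u : ℝ, g u ≤ 1 := by
    intro u
    have h1 : P {ω | T ω > u} ≤ 1 := prob_le_one
    calc g u ≤ ENNReal.toReal 1 := ENNReal.toReal_mono (by simp) h1
      _ = 1 := by simp
  -- g(2t)/g(t) → 2^(-α)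
  have h2α : Tendsto (fun t => g (2*t) / g t) atTop (nhds ((2:ℝ) ^ (-α))) := by
    have h1 := (hL 2 two_pos).mul_const ((2:ℝ) ^ (-α))
    rw [one_mul] at h1
    refine h1.congr' ?_
    filter_upwards [eventually_gt_atTop (0:ℝ)] with t ht
    have h2t : (0:ℝ) < 2*t := by linarith
    rw [gtail t ht, gtail (2*t) h2t, Real.mul_rpow (by norm_num) ht.le]
    have hLt := hLpos t ht
    have htα : (0:ℝ) < t ^ (-α) := Real.rpow_pos_of_pos ht _
    field_simp
  set r : ℝ := (2:ℝ) ^ (-β') with hr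
  have hrpos : 0 < r := Real.rpow_pos_of_pos two_pos _
  have hr1 : r ≤ 1 := by
    rw [hr]
    exact (Real.rpow_lt_one_of_one_lt_of_neg one_lt_two (by linarith)).le
  have hr2 : r < (2:ℝ) ^ (-α) := by
    rw [hr]
    exact (Real.rpow_lt_rpow_left_iff one_lt_two).mpr (by rw [hβ']; linarith)
  have hev0 : ∀ᶠ t in atTop, r ≤ g (2*t) / g t := h2α.eventually (eventually_ge_nhds hr2)
  obtain ⟨T₀', hT₀'⟩ := eventually_atTop.mp hev0
  set T₀ : ℝ := max T₀' 1 with hT₀def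
  have hT₀1 : (1:ℝ) ≤ T₀ := le_max_right _ _
  have hT₀0 : (0:ℝ) < T₀ := lt_of_lt_of_le one_pos hT₀1
  have key : ∀ t : ℝ, T₀ ≤ t → r * g t ≤ g (2*t) := by
    intro t ht
    have ht0 : 0 < t := lt_of_lt_of_le hT₀0 ht
    have := hT₀' t (le_trans (le_max_left _ _) ht)
    rw [le_div_iff₀ (gpos t ht0)] at this
    linarith
  -- induction: g (2^n * T₀) ≥ r^n * g T₀
  have hind : ∀ n : ℕ, r ^ n * g T₀ ≤ g ((2:ℝ) ^ n * T₀) := by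
    intro n
    induction n with
    | zero => simp
    | succ m ih =>
      have hp : (1:ℝ) ≤ (2:ℝ) ^ m := one_le_pow₀ (by norm_num)
      have h1 : T₀ ≤ (2:ℝ) ^ m * T₀ := le_mul_of_one_le_left hT₀0.le hp
      have h2 := key ((2:ℝ) ^ m * T₀) h1
      have h3 : r * (r ^ m * g T₀) ≤ r * g ((2:ℝ) ^ m * T₀) :=
        mul_le_mul_of_nonneg_left ih hrpos.le
      calc r ^ (m+1) * g T₀ = r * (r ^ m * g T₀) := by ring
        _ ≤ r * g ((2:ℝ) ^ m * T₀) := h3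
        _ ≤ g (2 * ((2:ℝ) ^ m * T₀)) := h2
        _ = g ((2:ℝ) ^ (m+1) * T₀) := by ring_nf
  set c : ℝ := g T₀ * r * T₀ ^ β' with hc
  have hgT₀ : 0 < g T₀ := gpos T₀ hT₀0
  have hcpos : 0 < c := by
    have := Real.rpow_pos_of_pos hT₀0 β'
    rw [hc]; positivity
  -- lower bound: g t ≥ c * t^(-β') for t ≥ T₀
  have lower : ∀ t : ℝ, T₀ ≤ t → c * t ^ (-β') ≤ g t := by
    intro t ht
    have ht0 : 0 < t := lt_of_lt_of_le hT₀0 ht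
    have hex : ∃ n : ℕ, t ≤ (2:ℝ) ^ n * T₀ := by
      obtain ⟨n, hn⟩ := pow_unbounded_of_one_lt (t / T₀) one_lt_two
      refine ⟨n, ?_⟩
      rw [div_lt_iff₀ hT₀0] at hn
      linarith
    set n := Nat.find hex with hn
    have hspec : t ≤ (2:ℝ) ^ n * T₀ := Nat.find_spec hex
    have h2n : (2:ℝ) ^ n * T₀ ≤ 2 * t := by
      rcases Nat.eq_zero_or_pos n with h0 | hpos
      · rw [h0]; simpa using by linarith
      · have hmin := Nat.find_min hex (Nat.sub_lt hpos one_pos)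
        have : ¬ (t ≤ (2:ℝ) ^ (n - 1) * T₀) := hmin
        push_neg at this
        have hpow : (2:ℝ) ^ n = 2 * (2:ℝ) ^ (n - 1) := by
          rw [← pow_succ']
          congr 1
          omega
        rw [hpow]
        nlinarith
    -- r^n = (2^n)^(-β')
    have hrn : r ^ n = ((2:ℝ) ^ n) ^ (-β') := by
      rw [hr, ← Real.rpow_natCast ((2:ℝ) ^ (-β')) n, ← Real.rpow_mul (by norm_num),
        ← Real.rpow_natCast (2:ℝ) n, ← Real.rpow_mul (by norm_num)]
      ring_nf
    have hp0 : (0:ℝ) < (2:ℝ) ^ n := by positivity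
    have hle : (2:ℝ) ^ n ≤ 2 * t / T₀ := by
      rw [le_div_iff₀ hT₀0]; linarith
    have hanti : (2 * t / T₀) ^ (-β') ≤ ((2:ℝ) ^ n) ^ (-β') :=
      Real.rpow_le_rpow_of_nonpos hp0 hle (by linarith)
    have heq : (2 * t / T₀) ^ (-β') = r * t ^ (-β') / T₀ ^ (-β') := by
      rw [Real.div_rpow (by linarith) hT₀0.le, Real.mul_rpow (by norm_num) ht0.le, hr]
    have hTβ : T₀ ^ (-β') = (T₀ ^ β')⁻¹ := Real.rpow_neg hT₀0.le β'
    have heq2 : c * t ^ (-β') = g T₀ * (2 * t / T₀) ^ (-β') := by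
      rw [heq, hTβ, hc]
      have hTβpos : 0 < T₀ ^ β' := Real.rpow_pos_of_pos hT₀0 _
      field_simp
    calc c * t ^ (-β') = g T₀ * (2 * t / T₀) ^ (-β') := heq2
      _ ≤ g T₀ * ((2:ℝ) ^ n) ^ (-β') := mul_le_mul_of_nonneg_left hanti hgT₀.le
      _ = r ^ n * g T₀ := by rw [hrn]; ring
      _ ≤ g ((2:ℝ) ^ n * T₀) := hind n
      _ ≤ g t := gmono _ _ hspec
  -- eventual inequalities
  have hev1 : ∀ᶠ t in atTop, (1:ℝ) ≤ c * (2:ℝ) ^ (-β') * t ^ (ε/2) := by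
    have htt : Tendsto (fun t : ℝ => c * (2:ℝ) ^ (-β') * t ^ (ε/2)) atTop atTop := by
      have h1 : Tendsto (fun t : ℝ => t ^ (ε/2)) atTop atTop :=
        tendsto_rpow_atTop (by linarith)
      exact h1.const_mul_atTop (by positivity)
    exact htt.eventually_ge_atTop 1
  have hev2 : ∀ᶠ t in atTop, t ^ (-β) ≤ r := by
    have h1 : Tendsto (fun t : ℝ => t ^ (-β)) atTop (nhds 0) :=
      tendsto_rpow_neg_atTop hβpos
    exact h1.eventually (eventually_le_nhds hrpos)
  obtain ⟨M, hM⟩ := eventually_atTop.mp (hev1.and hev2)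
  refine ⟨max (max M T₀) 1, lt_of_lt_of_le one_pos (le_max_right _ _), ?_⟩
  intro t ht s hs
  have htM : M ≤ t := le_trans (le_trans (le_max_left _ _) (le_max_left _ _)) ht.le
  have htT₀ : T₀ ≤ t := le_trans (le_trans (le_max_right _ _) (le_max_left _ _)) ht.le
  have ht0 : 0 < t := lt_of_lt_of_le hT₀0 htT₀
  obtain ⟨hM1, hM2⟩ := hM t htM
  show t ^ (-(α + ε)) ≤ g (s + t) / g s
  have hgs0 : 0 < g s := gpos s hs
  rw [le_div_iff₀ hgs0]
  by_cases hst : s ≤ t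
  · -- s ≤ t : use g(s+t) ≥ g(2t) ≥ c (2t)^(-β') ≥ t^(-β)
    have h1 : g (2*t) ≤ g (s+t) := gmono _ _ (by linarith)
    have h2 : c * (2*t) ^ (-β') ≤ g (2*t) := lower (2*t) (by linarith)
    have h3 : t ^ (-(α+ε)) ≤ c * (2*t) ^ (-β') := by
      have heq : c * (2*t) ^ (-β') = c * (2:ℝ) ^ (-β') * t ^ (-β') := by
        rw [Real.mul_rpow (by norm_num) ht0.le]; ring
      have hsplit : t ^ (-(α+ε)) * t ^ (ε/2) = t ^ (-β') := by
        rw [← Real.rpow_add ht0, hβ']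
        ring_nf
      have htβ'pos : (0:ℝ) < t ^ (-β') := Real.rpow_pos_of_pos ht0 _
      have htβpos : (0:ℝ) < t ^ (-(α+ε)) := Real.rpow_pos_of_pos ht0 _
      have htε : (0:ℝ) < t ^ (ε/2) := Real.rpow_pos_of_pos ht0 _
      rw [heq]
      nlinarith [mul_le_mul_of_nonneg_left hM1 htβpos.le]
    have hβeq : t ^ (-(α+ε)) ≤ g (s+t) := by linarith
    have h4 : t ^ (-(α+ε)) * g s ≤ t ^ (-(α+ε)) :=
      mul_le_of_le_one_right (Real.rpow_pos_of_pos ht0 _).le (gle1 s)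
    linarith
  · -- t < s : use g(s+t) ≥ g(2s) ≥ r g(s) ≥ t^(-β) g(s)
    push_neg at hst
    have hsT₀ : T₀ ≤ s := le_trans htT₀ hst.le
    have h1 : g (2*s) ≤ g (s+t) := gmono _ _ (by linarith)
    have h2 : r * g s ≤ g (2*s) := key s hsT₀
    have h3 : t ^ (-(α+ε)) ≤ r := hM2
    have h4 := mul_le_mul_of_nonneg_right h3 hgs0.le
    linarith
end
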